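/- With c, H, V as in the LCS difference-table setting, let [x_i = y_j] denote 1 if x_i = y_j and 0 otherwise (where H(0,j) = 0 and V(i,0) = 0 are the boundary values). Then for all i,j ≥ 1: V(i,j) = max{[x_i = y_j] - H(i-1,j), 0, V(i,j-1) - H(i-1,j)} and H(i,j) = max{[x_i = y_j] - V(i,j-1), 0, H(i-1,j) - V(i,j-1)}. -/

import Mathlib

private lemma lcs_aux_drop {α : Type*} {Z A : List α} {a : α}
    (h : Z.Sublist (A ++ [a])) : Z.dropLast.Sublist A := by
  rcases List.sublist_append_iff.mp h with ⟨Z1, Z2, rfl, h1, h2⟩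
  rcases List.sublist_singleton.mp h2 with rfl | rfl
  · simpa using (Z1.dropLast_sublist).trans h1
  · simpa [List.dropLast_concat] using h1

private lemma lcs_aux_take {α : Type*} {X : List α} {i : ℕ} (hi : 1 ≤ i)
    (him : i ≤ X.length) :
    X.take i = X.take (i - 1) ++ [X[i - 1]'(by omega)] := by
  obtain ⟨i, rfl⟩ : ∃ k, i = k + 1 := ⟨i - 1, by omega⟩
  simpa using (List.take_concat_get X i (by omega)).symm

/-- Recurrences for the horizontal and vertical LCS difference tables
    (Proposition for the UW-RAM LCS algorithm). -/
theorem lcs_difference_recurrence {α : Type*} [DecidableEq α] (X Y : List α)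
    (c : ℕ → ℕ → ℕ)
    (hc : ∀ i j, IsGreatest
      {l : ℕ | ∃ Z : List α, Z.length = l ∧ Z.Sublist (X.take i) ∧ Z.Sublist (Y.take j)}
      (c i j))
    (H V : ℕ → ℕ → ℤ)
    (hH : ∀ i j, 1 ≤ j → H i j = (c i j : ℤ) - (c i (j - 1) : ℤ))
    (hH0 : ∀ j, H 0 j = 0)
    (hV : ∀ i j, 1 ≤ i → V i j = (c i j : ℤ) - (c (i - 1) j : ℤ))
    (hV0 : ∀ i, V i 0 = 0) :
    ∀ i j (hi : 1 ≤ i) (hj : 1 ≤ j) (him : i ≤ X.length) (hjn : j ≤ Y.length),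
      V i j = max (max ((if X[i - 1]'(by omega) = Y[j - 1]'(by omega) then (1 : ℤ) else 0)
                          - H (i - 1) j) 0)
                  (V i (j - 1) - H (i - 1) j) ∧
      H i j = max (max ((if X[i - 1]'(by omega) = Y[j - 1]'(by omega) then (1 : ℤ) else 0)
                          - V i (j - 1)) 0)
                  (H (i - 1) j - V i (j - 1)) := by
  intro i j hi hj him hjn
  have hXt := lcs_aux_take hi him
  have hYt := lcs_aux_take hj hjn
  -- monotonicity
  have hmono : ∀ i' j' i'' j'', i'' ≤ i' → j'' ≤ j' → c i'' j'' ≤ c i' j' := by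
    intro i' j' i'' j'' h1 h2
    obtain ⟨Z, hZl, hZX, hZY⟩ := (hc i'' j'').1
    refine (hc i' j').2 ⟨Z, hZl, hZX.trans ?_, hZY.trans ?_⟩
    · rw [show X.take i'' = (X.take i').take i'' by rw [List.take_take, min_eq_left h1]]
      exact List.take_sublist _ _
    · rw [show Y.take j'' = (Y.take j').take j'' by rw [List.take_take, min_eq_left h2]]
      exact List.take_sublist _ _
  -- single-row / single-column drops
  have hrow : c i (j - 1) ≤ c (i - 1) (j - 1) + 1 := by
    obtain ⟨Z, hZl, hZX, hZY⟩ := (hc i (j - 1)).1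
    have h1 : Z.dropLast.Sublist (X.take (i - 1)) := lcs_aux_drop (hXt ▸ hZX)
    have h2 : Z.dropLast.Sublist (Y.take (j - 1)) := (Z.dropLast_sublist).trans hZY
    have := (hc (i - 1) (j - 1)).2 ⟨Z.dropLast, rfl, h1, h2⟩
    simp [List.length_dropLast] at this; omega
  have hcol : c (i - 1) j ≤ c (i - 1) (j - 1) + 1 := by
    obtain ⟨Z, hZl, hZX, hZY⟩ := (hc (i - 1) j).1
    have h2 : Z.dropLast.Sublist (Y.take (j - 1)) := lcs_aux_drop (hYt ▸ hZY)
    have h1 : Z.dropLast.Sublist (X.take (i - 1)) := (Z.dropLast_sublist).trans hZX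
    have := (hc (i - 1) (j - 1)).2 ⟨Z.dropLast, rfl, h1, h2⟩
    simp [List.length_dropLast] at this; omega
  -- diagonal drop
  have hdiag : c i j ≤ c (i - 1) (j - 1) + 1 := by
    obtain ⟨Z, hZl, hZX, hZY⟩ := (hc i j).1
    have h1 : Z.dropLast.Sublist (X.take (i - 1)) := lcs_aux_drop (hXt ▸ hZX)
    have h2 : Z.dropLast.Sublist (Y.take (j - 1)) := lcs_aux_drop (hYt ▸ hZY)
    have := (hc (i - 1) (j - 1)).2 ⟨Z.dropLast, rfl, h1, h2⟩
    simp [List.length_dropLast] at this; omega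
  -- match / mismatch case facts
  by_cases hm : X[i - 1]'(by omega) = Y[j - 1]'(by omega)
  · have hge : c (i - 1) (j - 1) + 1 ≤ c i j := by
      obtain ⟨W, hWl, hWX, hWY⟩ := (hc (i - 1) (j - 1)).1
      refine (hc i j).2 ⟨W ++ [X[i - 1]'(by omega)], by simp [hWl], ?_, ?_⟩
      · rw [hXt]; exact hWX.append (List.Sublist.refl _)
      · rw [hYt, hm]; exact hWY.append (List.Sublist.refl _)
    have hbe : c (i - 1) j ≤ c i j := hmono i j (i - 1) j (by omega) le_rfl
    have hde : c i (j - 1) ≤ c i j := hmono i j i (j - 1) le_rfl (by omega)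
    rw [hV i j hi, hV i (j - 1) hi, hH (i - 1) j hj, hH i j hj, if_pos hm]
    constructor <;> omega
  · have hmax : c i j ≤ max (c (i - 1) j) (c i (j - 1)) := by
      obtain ⟨Z, hZl, hZX, hZY⟩ := (hc i j).1
      rcases List.sublist_append_iff.mp (hXt ▸ hZX) with ⟨Z1, Z2, hZeq, h1, h2⟩
      rcases List.sublist_singleton.mp h2 with rfl | rfl
      · refine le_trans ((hc (i - 1) j).2 ⟨Z, hZl, ?_, hZY⟩) (le_max_left _ _)
        rw [hZeq]; simpa using h1
      rcases List.sublist_append_iff.mp (hYt ▸ hZY) with ⟨W1, W2, hWeq, g1, g2⟩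
      rcases List.sublist_singleton.mp g2 with rfl | rfl
      · refine le_trans ((hc i (j - 1)).2 ⟨Z, hZl, hZX, ?_⟩) (le_max_right _ _)
        rw [hWeq]; simpa using g1
      · exfalso
        apply hm
        have h := hZeq.symm.trans hWeq
        have hne : Z1 ++ [X[i-1]'(by omega)] ≠ [] := by simp
        calc X[i-1]'(by omega) = (Z1 ++ [X[i-1]'(by omega)]).getLast hne :=
              (List.getLast_concat).symm
          _ = (W1 ++ [Y[j-1]'(by omega)]).getLast (h ▸ hne) := by congr 1
          _ = Y[j-1]'(by omega) := List.getLast_concat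
    have hbe : c (i - 1) j ≤ c i j := hmono i j (i - 1) j (by omega) le_rfl
    have hde : c i (j - 1) ≤ c i j := hmono i j i (j - 1) le_rfl (by omega)
    have hab : c (i - 1) (j - 1) ≤ c (i - 1) j :=
      hmono (i - 1) j (i - 1) (j - 1) le_rfl (by omega)
    have had : c (i - 1) (j - 1) ≤ c i (j - 1) :=
      hmono i (j - 1) (i - 1) (j - 1) (by omega) le_rfl
    rw [hV i j hi, hV i (j - 1) hi, hH (i - 1) j hj, hH i j hj, if_neg hm]
    constructor <;> omega
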